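/- Let τ be a nonempty index set, φ : τ → τ a self-map, and w : τ → ℂ a weight vector such that σ_{φ,w} maps ℓ²(τ) into ℓ²(τ). Then the bounded operator σ_{φ,w}|_{ℓ²(τ)} : ℓ²(τ) → ℓ²(τ) is bijective if and only if φ : τ → τ is bijective, w_α ≠ 0 for all α ∈ τ, and sup { |w_α| + 1/|w_α| : α ∈ τ } < +∞. -/

import Mathlib

open scoped Classical in
noncomputable def wsDelta {τ : Type*} (α : τ) : lp (fun _ : τ => ℂ) 2 :=
  lp.single 2 α (1 : ℂ)

open scoped Classical in
lemma wsDelta_self {τ : Type*} (α : τ) : (wsDelta α : ∀ _ : τ, ℂ) α = 1 :=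
  lp.single_apply_self (E := fun _ : τ => ℂ) 2 α (1 : ℂ)

open scoped Classical in
lemma wsDelta_ne {τ : Type*} {α β : τ} (h : β ≠ α) : (wsDelta α : ∀ _ : τ, ℂ) β = 0 :=
  lp.single_apply_ne (E := fun _ : τ => ℂ) 2 α (1 : ℂ) h

open scoped Classical in
lemma wsDelta_norm {τ : Type*} (α : τ) : ‖wsDelta α‖ = 1 := by
  have h := lp.norm_single (E := fun _ : τ => ℂ) (p := 2) (by norm_num) α (1 : ℂ)
  simpa [wsDelta] using h

/-- The bounded weighted generalized shift operator `σ_{φ,w}|_{ℓ²(τ)}` is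
bijective if and only if `φ` is bijective, `w_α ≠ 0` for all `α`, and
`sup { |w_α| + 1/|w_α| : α ∈ τ } < +∞`. -/
theorem weighted_shift_bijective_iff {τ : Type*} [Nonempty τ] (φ : τ → τ) (w : τ → ℂ)
    (T : lp (fun _ : τ => ℂ) 2 →L[ℂ] lp (fun _ : τ => ℂ) 2)
    (hT : ∀ (x : lp (fun _ : τ => ℂ) 2) (α : τ), T x α = w α * x (φ α)) :
    Function.Bijective T ↔
      Function.Bijective φ ∧ (∀ α, w α ≠ 0) ∧
        BddAbove (Set.range fun α => ‖w α‖ + 1 / ‖w α‖) := by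
  have h2 : (2 : ENNReal) ≠ 0 := by norm_num
  constructor
  · rintro ⟨hinj, hsurj⟩
    have hw : ∀ α, w α ≠ 0 := by
      intro α hα
      obtain ⟨x, hx⟩ := hsurj (wsDelta α)
      have h1 : (T x) α = (wsDelta α : ∀ _ : τ, ℂ) α := by rw [hx]
      rw [wsDelta_self, hT, hα, zero_mul] at h1
      exact one_ne_zero h1.symm
    have hφi : Function.Injective φ := by
      intro a b hab
      by_contra hne
      obtain ⟨x, hx⟩ := hsurj (wsDelta a)
      have h1 : (T x) a = (wsDelta a : ∀ _ : τ, ℂ) a := by rw [hx]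
      have h2' : (T x) b = (wsDelta a : ∀ _ : τ, ℂ) b := by rw [hx]
      rw [wsDelta_self, hT] at h1
      rw [wsDelta_ne (Ne.symm hne), hT, ← hab] at h2'
      have hx0 : x (φ a) = 0 := (mul_eq_zero.mp h2').resolve_left (hw b)
      rw [hx0, mul_zero] at h1
      exact zero_ne_one h1
    have hφs : Function.Surjective φ := by
      intro β
      by_contra hβ
      push_neg at hβ
      have h0 : T (wsDelta β) = T 0 := by
        rw [map_zero]
        refine lp.ext (funext fun α => ?_)
        rw [hT, wsDelta_ne (hβ α), mul_zero]
        simp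
      have heq := hinj h0
      have h1 : (wsDelta β : ∀ _ : τ, ℂ) β = 1 := wsDelta_self β
      rw [heq] at h1
      simp at h1
    have hker : T.ker = ⊥ := LinearMap.ker_eq_bot.mpr hinj
    have hrange : T.range = ⊤ := LinearMap.range_eq_top.mpr hsurj
    set S : lp (fun _ : τ => ℂ) 2 →L[ℂ] lp (fun _ : τ => ℂ) 2 :=
      (ContinuousLinearEquiv.ofBijective T hker hrange).symm.toContinuousLinearMap with hS
    refine ⟨⟨hφi, hφs⟩, hw, ‖T‖ + ‖S‖, ?_⟩
    rintro r ⟨α, rfl⟩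
    have hb1 : ‖w α‖ ≤ ‖T‖ := by
      have h1 : (T (wsDelta (φ α))) α = w α := by
        rw [hT, wsDelta_self, mul_one]
      calc ‖w α‖ = ‖(T (wsDelta (φ α))) α‖ := by rw [h1]
        _ ≤ ‖T (wsDelta (φ α))‖ := lp.norm_apply_le_norm h2 _ α
        _ ≤ ‖T‖ * ‖wsDelta (φ α)‖ := T.le_opNorm _
        _ = ‖T‖ := by rw [wsDelta_norm, mul_one]
    have hb2 : 1 / ‖w α‖ ≤ ‖S‖ := by
      set x := S (wsDelta α) with hxdef
      have hTx : T x = wsDelta α :=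
        ContinuousLinearEquiv.ofBijective_apply_symm_apply T hker hrange _
      have h1 : w α * x (φ α) = 1 := by
        rw [← hT, hTx, wsDelta_self]
      have hwn : ‖w α‖ ≠ 0 := norm_ne_zero_iff.mpr (hw α)
      have hxn : ‖x (φ α)‖ = 1 / ‖w α‖ := by
        have h3 := congrArg norm h1
        rw [norm_mul, norm_one] at h3
        exact eq_one_div_of_mul_eq_one_left (by linarith [mul_comm ‖w α‖ ‖x (φ α)‖, h3])
      calc 1 / ‖w α‖ = ‖x (φ α)‖ := hxn.symm
        _ ≤ ‖x‖ := lp.norm_apply_le_norm h2 _ _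
        _ ≤ ‖S‖ * ‖wsDelta α‖ := S.le_opNorm _
        _ = ‖S‖ := by rw [wsDelta_norm, mul_one]
    exact add_le_add hb1 hb2
  · rintro ⟨hφ, hw, M, hM⟩
    have hp : (0:ℝ) < (2 : ENNReal).toReal := by norm_num
    have hM' : ∀ α, 1 / ‖w α‖ ≤ M := fun α =>
      le_trans (le_add_of_nonneg_left (norm_nonneg _)) (hM (Set.mem_range_self α))
    have hM0 : 0 ≤ M := le_trans (by positivity) (hM' (Classical.arbitrary τ))
    constructor
    · have hz : ∀ x : lp (fun _ : τ => ℂ) 2, T x = 0 → x = 0 := by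
        intro x hx
        refine lp.ext (funext fun β => ?_)
        obtain ⟨α, rfl⟩ := hφ.2 β
        have h1 : (T x) α = (0 : lp (fun _ : τ => ℂ) 2) α := by rw [hx]
        rw [hT] at h1
        simp only [lp.coeFn_zero, Pi.zero_apply] at h1 ⊢
        exact (mul_eq_zero.mp h1).resolve_left (hw α)
      intro a b hab
      have := hz (a - b) (by rw [map_sub, hab, sub_self])
      exact sub_eq_zero.mp this
    · intro y
      set e := Equiv.ofBijective φ hφ with he
      set f : τ → ℂ := fun β => y (e.symm β) / w (e.symm β) with hf
      have hmem : Memℓp f 2 := by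
        apply memℓp_gen
        have hy : Summable fun β => ‖y β‖ ^ (2 : ENNReal).toReal :=
          (memℓp_gen_iff hp).1 (lp.memℓp y)
        have hy2 : Summable fun β =>
            M ^ (2 : ENNReal).toReal * ‖y (e.symm β)‖ ^ (2 : ENNReal).toReal := by
          apply Summable.mul_left
          exact (e.symm.summable_iff (f := fun β => ‖y β‖ ^ (2 : ENNReal).toReal)).2 hy
        refine Summable.of_nonneg_of_le (fun β => by positivity) (fun β => ?_) hy2
        rw [← Real.mul_rpow hM0 (norm_nonneg _)]
        refine Real.rpow_le_rpow (norm_nonneg _) ?_ hp.le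
        rw [hf]
        simp only [norm_div]
        rw [div_eq_mul_one_div, mul_comm]
        exact mul_le_mul_of_nonneg_right (hM' _) (norm_nonneg _)
      refine ⟨⟨f, hmem⟩, ?_⟩
      refine lp.ext (funext fun β => ?_)
      rw [hT]
      have hcoe : ((⟨f, hmem⟩ : lp (fun _ : τ => ℂ) 2) : ∀ _ : τ, ℂ) = f := rfl
      rw [hcoe, hf]
      simp only
      rw [show φ β = e β from rfl, e.symm_apply_apply]
      rw [mul_comm, div_mul_cancel₀ _ (hw β)]
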